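/- If for every B > 0 one has lim_{n→∞} P( √n |X̄_n − S| ≤ B ) = 0, then lim_{n→∞} P_e^{(n)} = 0. -/

import Mathlib

open MeasureTheory Filter Real Finset

namespace SentAux

def e (c : Bool) : ℝ := if c then 1 else -1

lemma e_val (c : Bool) : e c = 1 ∨ e c = -1 := by cases c <;> simp [e]

lemma e_inj : Function.Injective e := by
  intro a b h; cases a <;> cases b <;> simp [e] at h ⊢ <;> norm_num at h

def w (p : ℝ) (ai bi : Bool) : ℝ := if bi = ai then 1 - p else p

lemma w_nonneg {p : ℝ} (hp0 : 0 < p) (hp1 : p < 1/2) (ai bi : Bool) : 0 ≤ w p ai bi := by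
  unfold w; split <;> linarith

lemma w_sum {p : ℝ} (ai : Bool) : ∑ c : Bool, w p ai c = 1 := by
  cases ai <;> simp [w, Fintype.sum_bool] <;> ring

lemma wg_sum {p : ℝ} (c2 : ℝ) (hc2 : c2 = 1 - 2*p) (ai : Bool) :
    ∑ c : Bool, w p ai c * (e c - c2 * e ai) = 0 := by
  subst hc2; cases ai <;> simp [w, e, Fintype.sum_bool] <;> ring

lemma wg2_sum {p : ℝ} (hp0 : 0 < p) (hp1 : p < 1/2) (c2 : ℝ) (hc2 : c2 = 1 - 2*p) (ai : Bool) :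
    ∑ c : Bool, w p ai c * (e c - c2 * e ai) ^ 2 ≤ 4 := by
  subst hc2; cases ai <;> simp [w, e, Fintype.sum_bool] <;> nlinarith


lemma cube_sum_prod {n : ℕ} (f : Fin n → Bool → ℝ) :
    ∑ b : Fin n → Bool, ∏ i, f i (b i) = ∏ i, ∑ c : Bool, f i c := by
  rw [Finset.prod_univ_sum]
  rw [Fintype.piFinset_univ]


lemma var_bound {n : ℕ} (w g : Fin n → Bool → ℝ)
    (hw0 : ∀ i c, 0 ≤ w i c)
    (hw1 : ∀ i, ∑ c : Bool, w i c = 1)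
    (hg0 : ∀ i, ∑ c : Bool, w i c * g i c = 0)
    (hg2 : ∀ i, ∑ c : Bool, w i c * g i c ^ 2 ≤ 4) :
    ∑ b : Fin n → Bool, (∏ i, w i (b i)) * (∑ i, g i (b i)) ^ 2 ≤ 4 * n := by
  have key : ∀ i j : Fin n,
      (∑ b : Fin n → Bool, (∏ k, w k (b k)) * (g i (b i) * g j (b j)))
        = ∏ k, ∑ c : Bool, w k c * (if i = k then g i c else 1) * (if j = k then g j c else 1) := by
    intro i j
    rw [← cube_sum_prod]
    refine Finset.sum_congr rfl fun b _ => ?_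
    rw [Finset.prod_mul_distrib, Finset.prod_mul_distrib, Finset.prod_ite_eq, Finset.prod_ite_eq]
    simp [mul_assoc]
  have expand : ∑ b : Fin n → Bool, (∏ i, w i (b i)) * (∑ i, g i (b i)) ^ 2
      = ∑ i : Fin n, ∑ j : Fin n, ∑ b : Fin n → Bool, (∏ k, w k (b k)) * (g i (b i) * g j (b j)) := by
    have h1 : ∀ b : Fin n → Bool, (∏ i, w i (b i)) * (∑ i, g i (b i)) ^ 2
        = ∑ i : Fin n, ∑ j : Fin n, (∏ k, w k (b k)) * (g i (b i) * g j (b j)) := by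
      intro b
      rw [sq, Finset.sum_mul_sum]
      rw [Finset.mul_sum]
      exact Finset.sum_congr rfl fun i _ => by rw [Finset.mul_sum]
    calc ∑ b : Fin n → Bool, (∏ i, w i (b i)) * (∑ i, g i (b i)) ^ 2
        = ∑ b : Fin n → Bool, ∑ i : Fin n, ∑ j : Fin n,
            (∏ k, w k (b k)) * (g i (b i) * g j (b j)) := Finset.sum_congr rfl fun b _ => h1 b
      _ = ∑ i : Fin n, ∑ b : Fin n → Bool, ∑ j : Fin n,
            (∏ k, w k (b k)) * (g i (b i) * g j (b j)) := Finset.sum_comm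
      _ = ∑ i : Fin n, ∑ j : Fin n, ∑ b : Fin n → Bool,
            (∏ k, w k (b k)) * (g i (b i) * g j (b j)) :=
          Finset.sum_congr rfl fun i _ => Finset.sum_comm
  rw [expand]
  have diag : ∀ i : Fin n, ∑ j : Fin n, ∑ b : Fin n → Bool,
      (∏ k, w k (b k)) * (g i (b i) * g j (b j)) ≤ 4 := by
    intro i
    have hzero : ∀ j : Fin n, j ≠ i → (∑ b : Fin n → Bool,
        (∏ k, w k (b k)) * (g i (b i) * g j (b j))) = 0 := by
      intro j hj
      rw [key i j]
      refine Finset.prod_eq_zero (Finset.mem_univ i) ?_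
      have : ∀ c : Bool, w i c * (if i = i then g i c else 1) * (if j = i then g j c else 1)
          = w i c * g i c := by
        intro c; rw [if_pos rfl, if_neg (by exact fun h => hj (by exact h ▸ rfl))]
        ring
      rw [Finset.sum_congr rfl fun c _ => this c, hg0 i]
    rw [Finset.sum_eq_single i (fun j _ hj => hzero j hj) (fun h => absurd (Finset.mem_univ i) h)]
    rw [key i i]
    have hprod : (∏ k, ∑ c : Bool, w k c * (if i = k then g i c else 1) * (if i = k then g i c else 1))
        = ∑ c : Bool, w i c * g i c * g i c := by
      have hother : ∀ k ∈ Finset.univ, k ≠ i →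
          (∑ c : Bool, w k c * (if i = k then g i c else 1) * (if i = k then g i c else 1)) = 1 := by
        intro k _ hk
        have hc : ∀ c : Bool, w k c * (if i = k then g i c else 1) * (if i = k then g i c else 1)
            = w k c := by
          intro c; rw [if_neg (fun h : i = k => hk h.symm)]; ring
        rw [Finset.sum_congr rfl fun c _ => hc c, hw1 k]
      rw [Finset.prod_eq_single i hother (fun h => absurd (Finset.mem_univ i) h)]
      refine Finset.sum_congr rfl fun c _ => by rw [if_pos rfl]
    rw [hprod]
    calc ∑ c : Bool, w i c * g i c * g i c = ∑ c : Bool, w i c * g i c ^ 2 := by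
          refine Finset.sum_congr rfl fun c _ => by ring
      _ ≤ 4 := hg2 i
  calc ∑ i : Fin n, ∑ j : Fin n, ∑ b : Fin n → Bool,
        (∏ k, w k (b k)) * (g i (b i) * g j (b j))
      ≤ ∑ _i : Fin n, (4 : ℝ) := Finset.sum_le_sum fun i _ => diag i
    _ = 4 * n := by simp [mul_comm]

lemma cheb {n : ℕ} (w g : Fin n → Bool → ℝ)
    (hw0 : ∀ i c, 0 ≤ w i c)
    (hw1 : ∀ i, ∑ c : Bool, w i c = 1)
    (hg0 : ∀ i, ∑ c : Bool, w i c * g i c = 0)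
    (hg2 : ∀ i, ∑ c : Bool, w i c * g i c ^ 2 ≤ 4)
    (t : ℝ) (ht : 0 < t) (A : Finset (Fin n → Bool))
    (hA : ∀ b ∈ A, t ≤ |∑ i, g i (b i)|) :
    ∑ b ∈ A, ∏ i, w i (b i) ≤ 4 * n / t ^ 2 := by
  have hWnn : ∀ b : Fin n → Bool, 0 ≤ ∏ i, w i (b i) :=
    fun b => Finset.prod_nonneg fun i _ => hw0 i (b i)
  have h1 : ∑ b ∈ A, ∏ i, w i (b i)
      ≤ ∑ b ∈ A, (∏ i, w i (b i)) * ((∑ i, g i (b i)) ^ 2 / t ^ 2) := by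
    refine Finset.sum_le_sum fun b hb => ?_
    have h2 : t ^ 2 ≤ (∑ i, g i (b i)) ^ 2 := by
      have := hA b hb
      nlinarith [abs_nonneg (∑ i, g i (b i)), sq_abs (∑ i, g i (b i))]
    have h3 : (1 : ℝ) ≤ (∑ i, g i (b i)) ^ 2 / t ^ 2 :=
      (one_le_div (by positivity)).2 h2
    nlinarith [hWnn b]
  have h4 : ∑ b ∈ A, (∏ i, w i (b i)) * ((∑ i, g i (b i)) ^ 2 / t ^ 2)
      ≤ ∑ b : Fin n → Bool, (∏ i, w i (b i)) * ((∑ i, g i (b i)) ^ 2 / t ^ 2) := by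
    refine Finset.sum_le_sum_of_subset_of_nonneg (Finset.subset_univ A) fun b _ _ => ?_
    have : 0 ≤ (∑ i, g i (b i)) ^ 2 / t ^ 2 := by positivity
    exact mul_nonneg (hWnn b) this
  have h5 : ∑ b : Fin n → Bool, (∏ i, w i (b i)) * ((∑ i, g i (b i)) ^ 2 / t ^ 2)
      = (∑ b : Fin n → Bool, (∏ i, w i (b i)) * (∑ i, g i (b i)) ^ 2) / t ^ 2 := by
    rw [Finset.sum_div]
    exact Finset.sum_congr rfl fun b _ => by ring
  have h6 := var_bound w g hw0 hw1 hg0 hg2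
  calc ∑ b ∈ A, ∏ i, w i (b i) ≤ _ := h1
    _ ≤ _ := h4
    _ = _ := h5
    _ ≤ 4 * n / t ^ 2 := (div_le_div_iff_of_pos_right (by positivity)).2 h6


lemma main_est {Ω : Type*} [MeasurableSpace Ω] (P : Measure Ω) [IsProbabilityMeasure P]
    (p S B : ℝ) (hp0 : 0 < p) (hp1 : p < 1/2) (hB : 0 < B)
    (n : ℕ) (hn : 1 ≤ n)
    (X Y : Ω → Fin n → ℝ)
    (hXval : ∀ ω i, X ω i = 1 ∨ X ω i = -1)
    (hYval : ∀ ω i, Y ω i = 1 ∨ Y ω i = -1)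
    (hXmeas : Measurable X) (hYmeas : Measurable Y)
    (hjoint : ∀ (x y : Fin n → ℝ), (∀ i, x i = 1 ∨ x i = -1) →
      (∀ i, y i = 1 ∨ y i = -1) →
      (P {ω | X ω = x ∧ Y ω = y}).toReal
        = (P {ω | X ω = x}).toReal * ∏ i, (if y i = x i then 1 - p else p)) :
    (P {ω | ((∑ i, X ω i) / n - S) * ((∑ i, Y ω i) / n - (1 - 2 * p) * S) < 0}).toReal
      ≤ (P {ω | Real.sqrt n * |(∑ i, X ω i) / n - S| ≤ B}).toReal
        + 4 / ((1 - 2*p)^2 * B^2) := by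
  classical
  have hn0 : (0:ℝ) < n := by exact_mod_cast hn
  have hnne : (n:ℝ) ≠ 0 := ne_of_gt hn0
  have hsqpos : 0 < Real.sqrt n := Real.sqrt_pos.2 hn0
  have hsq : Real.sqrt n * Real.sqrt n = n := Real.mul_self_sqrt (le_of_lt hn0)
  have h2p : 0 < 1 - 2*p := by linarith
  set c2 : ℝ := 1 - 2*p with hc2
  -- encode sign vectors
  set ea : (Fin n → Bool) → Fin n → ℝ := fun a i => e (a i) with hea
  have hea_val : ∀ a (i : Fin n), ea a i = 1 ∨ ea a i = -1 := fun a i => e_val (a i)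
  have hea_inj : Function.Injective ea := fun a a' h => funext fun i => e_inj (congrFun h i)
  set Sev : (Fin n → Bool) × (Fin n → Bool) → Set Ω :=
    fun ab => {ω | X ω = ea ab.1 ∧ Y ω = ea ab.2} with hSev
  have hSevMeas : ∀ ab, MeasurableSet (Sev ab) := by
    intro ab
    have : Sev ab = X ⁻¹' {ea ab.1} ∩ Y ⁻¹' {ea ab.2} := by
      ext ω; simp [Sev, Set.mem_inter_iff]
    rw [this]
    exact (hXmeas (measurableSet_singleton _)).inter (hYmeas (measurableSet_singleton _))
  have hSevDisj : ∀ (s : Finset ((Fin n → Bool) × (Fin n → Bool))),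
      (↑s : Set _).PairwiseDisjoint Sev := by
    intro s ab _ ab' _ hne
    refine Set.disjoint_left.2 fun ω h1 h2 => hne ?_
    obtain ⟨hx1, hy1⟩ := h1
    obtain ⟨hx2, hy2⟩ := h2
    exact Prod.ext (hea_inj (hx1 ▸ hx2)) (hea_inj (hy1 ▸ hy2))
  -- every ω has a sign decomposition
  have hdecomp : ∀ ω, ∃ a b : Fin n → Bool, X ω = ea a ∧ Y ω = ea b := by
    intro ω
    refine ⟨fun i => if X ω i = 1 then true else false,
            fun i => if Y ω i = 1 then true else false, ?_, ?_⟩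
    · funext i
      rcases hXval ω i with h | h <;> simp [ea, e, h]
    · funext i
      rcases hYval ω i with h | h <;> simp [ea, e, h]
  -- the bad (error) set as a finite union
  set Bad : Finset ((Fin n → Bool) × (Fin n → Bool)) :=
    Finset.univ.filter (fun ab =>
      ((∑ i, ea ab.1 i) / n - S) * ((∑ i, ea ab.2 i) / n - c2 * S) < 0) with hBad
  have hEeq : {ω | ((∑ i, X ω i) / n - S) * ((∑ i, Y ω i) / n - (1 - 2 * p) * S) < 0}
      = ⋃ ab ∈ Bad, Sev ab := by
    ext ω
    simp only [Set.mem_setOf_eq, Set.mem_iUnion]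
    constructor
    · intro h
      obtain ⟨a, b, hXa, hYb⟩ := hdecomp ω
      refine ⟨(a, b), ?_, hXa, hYb⟩
      rw [hBad, Finset.mem_filter]
      rw [hXa, hYb] at h
      exact ⟨Finset.mem_univ _, h⟩
    · rintro ⟨ab, hab, hXa, hYb⟩
      rw [hBad, Finset.mem_filter] at hab
      rw [hXa, hYb]
      exact hab.2
  have hPE : (P {ω | ((∑ i, X ω i) / n - S) * ((∑ i, Y ω i) / n - (1 - 2 * p) * S) < 0}).toReal
      = ∑ ab ∈ Bad, (P (Sev ab)).toReal := by
    rw [hEeq, measure_biUnion_finset (hSevDisj Bad) (fun ab _ => hSevMeas ab),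
      ENNReal.toReal_sum (fun ab _ => measure_ne_top P _)]
  -- per-term formula
  set Pa : (Fin n → Bool) → ℝ := fun a => (P {ω | X ω = ea a}).toReal with hPa
  have hPa0 : ∀ a, 0 ≤ Pa a := fun a => ENNReal.toReal_nonneg
  have hterm : ∀ ab : (Fin n → Bool) × (Fin n → Bool),
      (P (Sev ab)).toReal = Pa ab.1 * ∏ i, w p (ab.1 i) (ab.2 i) := by
    intro ab
    rw [hSev]
    rw [hjoint (ea ab.1) (ea ab.2) (hea_val ab.1) (hea_val ab.2)]
    congr 1
    refine Finset.prod_congr rfl fun i _ => ?_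
    by_cases h : ab.2 i = ab.1 i
    · rw [if_pos (show ea ab.2 i = ea ab.1 i by simp [ea, h]), w, if_pos h]
    · rw [if_neg (fun hh => h (e_inj hh)), w, if_neg h]
  have hWnn : ∀ a b : Fin n → Bool, 0 ≤ ∏ i, w p (a i) (b i) :=
    fun a b => Finset.prod_nonneg fun i _ => w_nonneg hp0 hp1 _ _
  have hWsum : ∀ a : Fin n → Bool, ∑ b : Fin n → Bool, ∏ i, w p (a i) (b i) = 1 := by
    intro a
    rw [cube_sum_prod (fun i c => w p (a i) c)]
    refine Finset.prod_eq_one fun i _ => ?_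
    simpa [Fintype.sum_bool] using w_sum (p := p) (a i)
  -- fibers of X are disjoint measurable sets
  have hfibDisj : ∀ (F : Finset (Fin n → Bool)), (↑F : Set _).PairwiseDisjoint
      (fun a => {ω | X ω = ea a}) := by
    intro F a _ a' _ hne
    refine Set.disjoint_left.2 fun ω h1 h2 => hne (hea_inj (h1.symm ▸ h2 ▸ rfl))
  have hfibMeas : ∀ a : Fin n → Bool, MeasurableSet {ω | X ω = ea a} := by
    intro a
    have : {ω | X ω = ea a} = X ⁻¹' {ea a} := by ext ω; simp
    rw [this]; exact hXmeas (measurableSet_singleton _)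
  -- total mass of Pa is at most 1
  have hPaTot : ∑ a : Fin n → Bool, Pa a ≤ 1 := by
    calc ∑ a : Fin n → Bool, Pa a
        = (∑ a : Fin n → Bool, P {ω | X ω = ea a}).toReal :=
          (ENNReal.toReal_sum (fun a _ => measure_ne_top P _)).symm
      _ = (P (⋃ a ∈ (Finset.univ : Finset (Fin n → Bool)), {ω | X ω = ea a})).toReal := by
          rw [measure_biUnion_finset (hfibDisj _) (fun a _ => hfibMeas a)]
      _ ≤ (P Set.univ).toReal :=
          ENNReal.toReal_mono (measure_ne_top P _) (measure_mono (Set.subset_univ _))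
      _ = 1 := by simp
  -- near predicate
  set near : (Fin n → Bool) → Prop :=
    fun a => Real.sqrt n * |(∑ i, ea a i) / n - S| ≤ B with hnear
  have hNearBound : ∀ F : Finset (Fin n → Bool), (∀ a ∈ F, near a) →
      ∑ a ∈ F, Pa a ≤ (P {ω | Real.sqrt n * |(∑ i, X ω i) / n - S| ≤ B}).toReal := by
    intro F hF
    calc ∑ a ∈ F, Pa a
        = (∑ a ∈ F, P {ω | X ω = ea a}).toReal :=
          (ENNReal.toReal_sum (fun a _ => measure_ne_top P _)).symm
      _ = (P (⋃ a ∈ F, {ω | X ω = ea a})).toReal := by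
          rw [measure_biUnion_finset (hfibDisj _) (fun a _ => hfibMeas a)]
      _ ≤ (P {ω | Real.sqrt n * |(∑ i, X ω i) / n - S| ≤ B}).toReal := by
          refine ENNReal.toReal_mono (measure_ne_top P _) (measure_mono ?_)
          intro ω hω
          simp only [Set.mem_iUnion] at hω
          obtain ⟨a, haF, hXa⟩ := hω
          simp only [Set.mem_setOf_eq] at hXa ⊢
          rw [hXa]
          exact hF a haF
  -- the deviation bound for far bad pairs
  set t : ℝ := c2 * B * Real.sqrt n with ht_def
  have ht : 0 < t := by positivity
  have hdev : ∀ a b : Fin n → Bool,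
      ((∑ i, ea a i) / n - S) * ((∑ i, ea b i) / n - c2 * S) < 0 → ¬ near a →
      t ≤ |∑ i, (e (b i) - c2 * e (a i))| := by
    intro a b hcond hfar
    set sx : ℝ := ∑ i, ea a i with hsx
    set sy : ℝ := ∑ i, ea b i with hsy
    have hsum : ∑ i, (e (b i) - c2 * e (a i)) = sy - c2 * sx := by
      rw [Finset.sum_sub_distrib, ← Finset.mul_sum]
    rw [hsum]
    have hfar' : B < Real.sqrt n * |sx / n - S| := not_le.1 hfar
    rcases lt_trichotomy (sx / n - S) 0 with hx | hx | hx
    · -- sx/n < S : second factor positive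
      have hy : 0 < sy / n - c2 * S := by nlinarith
      have habs : |sx / n - S| = -(sx / n - S) := abs_of_neg hx
      have hfar2 : B < Real.sqrt n * (-(sx / n - S)) := by rw [← habs]; exact hfar'
      have hA : B * Real.sqrt n < n * S - sx := by
        have h := mul_lt_mul_of_pos_left hfar2 hsqpos
        have hrw : Real.sqrt n * (Real.sqrt n * (-(sx / n - S))) = n * S - sx := by
          rw [← mul_assoc, hsq]; field_simp; ring
        rw [hrw] at h; linarith
      have hB2 : n * (c2 * S) < sy := by
        have := (lt_div_iff₀ hn0).1 (by linarith : c2 * S < sy / n)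
        linarith
      have hmul := mul_lt_mul_of_pos_left hA h2p
      refine le_trans ?_ (le_abs_self _)
      have hexp : c2 * (↑n * S - sx) = ↑n * (c2 * S) - c2 * sx := by ring
      rw [ht_def]
      have hexp2 : c2 * (B * Real.sqrt ↑n) = c2 * B * Real.sqrt ↑n := by ring
      linarith
    · rw [hx, zero_mul] at hcond; exact absurd hcond (lt_irrefl 0)
    · -- sx/n > S : second factor negative
      have hy : sy / n - c2 * S < 0 := by nlinarith
      have habs : |sx / n - S| = sx / n - S := abs_of_pos hx
      have hfar2 : B < Real.sqrt n * (sx / n - S) := by rw [← habs]; exact hfar'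
      have hA : B * Real.sqrt n < sx - n * S := by
        have h := mul_lt_mul_of_pos_left hfar2 hsqpos
        have hrw : Real.sqrt n * (Real.sqrt n * (sx / n - S)) = sx - n * S := by
          rw [← mul_assoc, hsq]; field_simp
        rw [hrw] at h; linarith
      have hB2 : sy < n * (c2 * S) := by
        have := (div_lt_iff₀ hn0).1 (by linarith : sy / n < c2 * S)
        linarith
      have hmul := mul_lt_mul_of_pos_left hA h2p
      refine le_trans ?_ (neg_le_abs _)
      have hexp : c2 * (sx - ↑n * S) = c2 * sx - ↑n * (c2 * S) := by ring
      rw [ht_def]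
      have hexp2 : c2 * (B * Real.sqrt ↑n) = c2 * B * Real.sqrt ↑n := by ring
      linarith
  -- rewrite and split the main sum
  rw [hPE, Finset.sum_congr rfl (fun ab _ => hterm ab),
    ← Finset.sum_filter_add_sum_filter_not Bad (fun ab => near ab.1)]
  have part1 : ∑ ab ∈ Bad.filter (fun ab => near ab.1),
      Pa ab.1 * ∏ i, w p (ab.1 i) (ab.2 i)
      ≤ (P {ω | Real.sqrt n * |(∑ i, X ω i) / n - S| ≤ B}).toReal := by
    have hsub : Bad.filter (fun ab => near ab.1)
        ⊆ (Finset.univ.filter near) ×ˢ (Finset.univ : Finset (Fin n → Bool)) := by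
      intro ab hab
      rw [Finset.mem_filter] at hab
      rw [Finset.mem_product, Finset.mem_filter]
      exact ⟨⟨Finset.mem_univ _, hab.2⟩, Finset.mem_univ _⟩
    calc ∑ ab ∈ Bad.filter (fun ab => near ab.1), Pa ab.1 * ∏ i, w p (ab.1 i) (ab.2 i)
        ≤ ∑ ab ∈ (Finset.univ.filter near) ×ˢ (Finset.univ : Finset (Fin n → Bool)),
            Pa ab.1 * ∏ i, w p (ab.1 i) (ab.2 i) :=
          Finset.sum_le_sum_of_subset_of_nonneg hsub
            (fun ab _ _ => mul_nonneg (hPa0 _) (hWnn _ _))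
      _ = ∑ a ∈ Finset.univ.filter near, ∑ b : Fin n → Bool,
            Pa a * ∏ i, w p (a i) (b i) := by exact Finset.sum_product _ _ _
      _ = ∑ a ∈ Finset.univ.filter near, Pa a := by
          refine Finset.sum_congr rfl fun a _ => ?_
          rw [← Finset.mul_sum, hWsum a, mul_one]
      _ ≤ _ := hNearBound _ (fun a ha => (Finset.mem_filter.1 ha).2)
  have part2 : ∑ ab ∈ Bad.filter (fun ab => ¬ near ab.1),
      Pa ab.1 * ∏ i, w p (ab.1 i) (ab.2 i) ≤ 4 / ((1 - 2*p)^2 * B^2) := by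
    have ht2 : t ^ 2 = (1 - 2*p)^2 * B^2 * n := by
      rw [ht_def, hc2, mul_pow, mul_pow, Real.sq_sqrt (le_of_lt hn0)]
    have hconst : 4 * (n:ℝ) / t ^ 2 = 4 / ((1 - 2*p)^2 * B^2) := by
      rw [ht2]
      rw [div_eq_div_iff (by nlinarith [sq_nonneg (1 - 2*p), sq_nonneg B]) (by nlinarith)]
      ring
    have hconstnn : 0 ≤ 4 * (n:ℝ) / t ^ 2 := by positivity
    have inner : ∀ a : Fin n → Bool,
        ∑ b ∈ Finset.univ.filter (fun b => ((a, b) ∈ Bad ∧ ¬ near a)),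
          Pa a * ∏ i, w p (a i) (b i) ≤ Pa a * (4 * n / t ^ 2) := by
      intro a
      rw [← Finset.mul_sum]
      refine mul_le_mul_of_nonneg_left ?_ (hPa0 a)
      refine cheb (fun i c => w p (a i) c) (fun i c => e c - c2 * e (a i))
        (fun i c => w_nonneg hp0 hp1 _ _) (fun i => w_sum _)
        (fun i => wg_sum c2 hc2 _) (fun i => wg2_sum hp0 hp1 c2 hc2 _) t ht _ ?_
      intro b hb
      rw [Finset.mem_filter] at hb
      obtain ⟨-, hbBad, hbfar⟩ := hb
      rw [hBad, Finset.mem_filter] at hbBad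
      exact hdev a b hbBad.2 hbfar
    have hfilter : Bad.filter (fun ab => ¬ near ab.1)
        = Finset.univ.filter (fun ab : (Fin n → Bool) × (Fin n → Bool) =>
            (ab ∈ Bad ∧ ¬ near ab.1)) := by
      ext ab
      simp only [Finset.mem_filter, Finset.mem_univ, true_and]
    calc ∑ ab ∈ Bad.filter (fun ab => ¬ near ab.1),
          Pa ab.1 * ∏ i, w p (ab.1 i) (ab.2 i)
        = ∑ ab : (Fin n → Bool) × (Fin n → Bool),
            if (ab ∈ Bad ∧ ¬ near ab.1) then Pa ab.1 * ∏ i, w p (ab.1 i) (ab.2 i) else 0 := by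
          rw [hfilter, Finset.sum_filter]
      _ = ∑ a : Fin n → Bool, ∑ b : Fin n → Bool,
            if ((a, b) ∈ Bad ∧ ¬ near a) then Pa a * ∏ i, w p (a i) (b i) else 0 :=
          Fintype.sum_prod_type _
      _ = ∑ a : Fin n → Bool,
            ∑ b ∈ Finset.univ.filter (fun b => ((a, b) ∈ Bad ∧ ¬ near a)),
              Pa a * ∏ i, w p (a i) (b i) := by
          refine Finset.sum_congr rfl fun a _ => ?_
          rw [Finset.sum_filter]
      _ ≤ ∑ a : Fin n → Bool, Pa a * (4 * n / t ^ 2) :=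
          Finset.sum_le_sum fun a _ => inner a
      _ = (∑ a : Fin n → Bool, Pa a) * (4 * n / t ^ 2) := by
          rw [← Finset.sum_mul]
      _ ≤ 1 * (4 * n / t ^ 2) := mul_le_mul_of_nonneg_right hPaTot hconstnn
      _ = 4 / ((1 - 2*p)^2 * B^2) := by rw [one_mul, hconst]
  exact add_le_add part1 part2



end SentAux

open SentAux in
/-- In the sentiment detection model, if for every `B > 0` one has
`lim_{n→∞} P(√n |X̄_n - S| ≤ B)` = 0, then `lim_{n→∞} P_e^{(n)} = 0`. -/
theorem supermajority_error_tendsto_zero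
    {Ω : Type*} [MeasurableSpace Ω] (P : Measure Ω) [IsProbabilityMeasure P]
    (p S : ℝ) (hp0 : 0 < p) (hp1 : p < 1 / 2) (hS0 : -1 < S) (hS1 : S < 1)
    (X Y : (n : ℕ) → Ω → Fin n → ℝ)
    (hXval : ∀ n ω i, X n ω i = 1 ∨ X n ω i = -1)
    (hYval : ∀ n ω i, Y n ω i = 1 ∨ Y n ω i = -1)
    (hXmeas : ∀ n, Measurable (X n))
    (hYmeas : ∀ n, Measurable (Y n))
    (hjoint : ∀ n (x y : Fin n → ℝ), (∀ i, x i = 1 ∨ x i = -1) →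
      (∀ i, y i = 1 ∨ y i = -1) →
      (P {ω | X n ω = x ∧ Y n ω = y}).toReal
        = (P {ω | X n ω = x}).toReal * ∏ i, (if y i = x i then 1 - p else p))
    (hconc : ∀ B : ℝ, 0 < B →
      Tendsto (fun n : ℕ =>
        (P {ω | Real.sqrt n * |(∑ i, X n ω i) / n - S| ≤ B}).toReal) atTop (nhds 0)) :
    Tendsto (fun n : ℕ =>
        (P {ω | ((∑ i, X n ω i) / n - S) * ((∑ i, Y n ω i) / n - (1 - 2 * p) * S) < 0}).toReal)
      atTop (nhds 0) := by
  have h2p : 0 < 1 - 2 * p := by linarith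
  rw [Metric.tendsto_atTop]
  intro ε hε
  obtain ⟨B, hBpos, hBbig⟩ : ∃ B : ℝ, 0 < B ∧ 8 / ((1 - 2*p)^2 * ε) < B ^ 2 := by
    refine ⟨Real.sqrt (8 / ((1 - 2*p)^2 * ε)) + 1, by positivity, ?_⟩
    have h8 : 0 ≤ 8 / ((1 - 2*p)^2 * ε) := by positivity
    nlinarith [Real.sq_sqrt h8, Real.sqrt_nonneg (8 / ((1 - 2*p)^2 * ε))]
  have hhalf : 4 / ((1 - 2*p)^2 * B^2) < ε / 2 := by
    rw [div_lt_iff₀ (by positivity)]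
    have h1 := (div_lt_iff₀ (by positivity : (0:ℝ) < (1 - 2*p)^2 * ε)).1 hBbig
    have h2 : B^2 * ((1 - 2*p)^2 * ε) = 2 * (ε / 2 * ((1 - 2*p)^2 * B^2)) := by ring
    linarith
  obtain ⟨N, hN⟩ := (Metric.tendsto_atTop.1 (hconc B hBpos)) (ε / 2) (by linarith)
  refine ⟨max N 1, fun n hn => ?_⟩
  have hn1 : 1 ≤ n := le_trans (le_max_right N 1) hn
  have hnN : N ≤ n := le_trans (le_max_left N 1) hn
  have hg := hN n hnN
  rw [Real.dist_eq, sub_zero] at hg ⊢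
  have hkey := main_est P p S B hp0 hp1 hBpos n hn1 (X n) (Y n)
    (hXval n) (hYval n) (hXmeas n) (hYmeas n) (hjoint n)
  rw [abs_of_nonneg ENNReal.toReal_nonneg]
  have hg' : (P {ω | Real.sqrt n * |(∑ i, X n ω i) / n - S| ≤ B}).toReal < ε / 2 :=
    lt_of_abs_lt hg
  linarith
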